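/- arXiv:2504.19841 — 2 statements merged into one kernel-verified Lean document; each statement's English description precedes it below -/
import Mathlib

section
/- Let η₁, …, η_{N₁} be independent real random variables, each symmetric about zero (η_j and −η_j identically distributed), let c ∈ ℝ, and set τ̂_j = c + η_j for j = 1, …, N₁. Define the sign-change p-value p̂ = 2^{−N₁} Σ_{g∈{−1,1}^{N₁}} 1{ |(1/N₁) Σ_j g_j (τ̂_j − c)| ≥ |(1/N₁) Σ_j (τ̂_j − c)| }. Then for every α ∈ [0, 1], P(p̂ ≤ α) ≤ α. -/
open MeasureTheory ProbabilityTheory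
open scoped ENNReal
open scoped ProbabilityTheory

namespace Stmt5Aux

noncomputable def sgn (b : Bool) : ℝ := if b then 1 else -1

lemma sgn_mul_sgn (a b : Bool) : sgn a * sgn b = sgn (a == b) := by
  cases a <;> cases b <;> simp [sgn]

noncomputable def act {N : ℕ} (ε : Fin N → Bool) (x : Fin N → ℝ) : Fin N → ℝ :=
  fun j => sgn (ε j) * x j

lemma act_act {N : ℕ} (ε ε' : Fin N → Bool) (x : Fin N → ℝ) :
    act ε (act ε' x) = act (fun j => ε j == ε' j) x := by
  funext j; simp [act, ← mul_assoc, sgn_mul_sgn]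

noncomputable def T (N : ℕ) (x : Fin N → ℝ) : ℝ := |(1 / (N : ℝ)) * ∑ j, x j|

noncomputable def pv (N : ℕ) (x : Fin N → ℝ) : ℝ :=
  (1 / (2 : ℝ) ^ N) * ∑ g : Fin N → Bool, if T N x ≤ T N (act g x) then 1 else 0

lemma measurable_T (N : ℕ) : Measurable (T N) := by
  apply Measurable.abs
  exact (Finset.measurable_sum _ fun j _ => measurable_pi_apply j).const_mul _

lemma measurable_act {N : ℕ} (ε : Fin N → Bool) : Measurable (act ε) :=
  measurable_pi_lambda _ fun j => (measurable_pi_apply j).const_mul _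

lemma measurable_pv (N : ℕ) : Measurable (pv N) := by
  apply Measurable.const_mul
  refine Finset.measurable_sum _ fun g _ => Measurable.ite ?_ measurable_const measurable_const
  exact measurableSet_le (measurable_T N) ((measurable_T N).comp (measurable_act g))

/-- The bool-xor-like involution used to reindex sums. -/
def beq_equiv {N : ℕ} (ε₀ : Fin N → Bool) : (Fin N → Bool) ≃ (Fin N → Bool) where
  toFun g := fun j => g j == ε₀ j
  invFun g := fun j => g j == ε₀ j
  left_inv g := by
    funext j; show ((g j == ε₀ j) == ε₀ j) = g j; cases g j <;> cases ε₀ j <;> rfl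
  right_inv g := by
    funext j; show ((g j == ε₀ j) == ε₀ j) = g j; cases g j <;> cases ε₀ j <;> rfl

lemma pv_act {N : ℕ} (ε₀ : Fin N → Bool) (x : Fin N → ℝ) :
    pv N (act ε₀ x) =
      (1 / (2 : ℝ) ^ N) * ∑ g : Fin N → Bool,
        if T N (act ε₀ x) ≤ T N (act g x) then 1 else 0 := by
  unfold pv
  congr 1
  rw [← Equiv.sum_comp (beq_equiv ε₀)]
  refine Finset.sum_congr rfl fun g _ => ?_
  have hg : (fun j => (beq_equiv ε₀) g j == ε₀ j) = g := by
    funext j; show ((g j == ε₀ j) == ε₀ j) = g j; cases g j <;> cases ε₀ j <;> rfl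
  rw [act_act, hg]

/-- The deterministic counting bound. -/
lemma key {N : ℕ} (x : Fin N → ℝ) (α : ℝ) (hα : 0 ≤ α) :
    (∑ ε₀ : Fin N → Bool, if pv N (act ε₀ x) ≤ α then (1 : ℝ) else 0) ≤ α * 2 ^ N := by
  classical
  set t : (Fin N → Bool) → ℝ := fun ε => T N (act ε x) with ht
  have h2 : (0:ℝ) < 2 ^ N := by positivity
  have hcnt : ∀ ε₀, pv N (act ε₀ x) =
      (1 / (2:ℝ)^N) * (Finset.univ.filter (fun g => t ε₀ ≤ t g)).card := by
    intro ε₀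
    rw [pv_act]
    congr 1
    rw [Finset.sum_boole]
  have hiff : ∀ ε₀, (pv N (act ε₀ x) ≤ α ↔
      ((Finset.univ.filter (fun g => t ε₀ ≤ t g)).card : ℝ) ≤ α * 2 ^ N) := by
    intro ε₀
    rw [hcnt ε₀, div_mul_eq_mul_div, one_mul, div_le_iff₀ h2]
  calc (∑ ε₀ : Fin N → Bool, if pv N (act ε₀ x) ≤ α then (1 : ℝ) else 0)
      = ((Finset.univ.filter (fun ε₀ => pv N (act ε₀ x) ≤ α)).card : ℝ) := by
        rw [Finset.sum_boole]
    _ ≤ α * 2 ^ N := by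
        set A := Finset.univ.filter (fun ε₀ => pv N (act ε₀ x) ≤ α) with hA
        rcases A.eq_empty_or_nonempty with h | h
        · rw [h]; simpa using by positivity
        · obtain ⟨ε', hε'A, hmin⟩ := A.exists_min_image t h
          have hsub : A ⊆ Finset.univ.filter (fun g => t ε' ≤ t g) := by
            intro g hg
            simp only [Finset.mem_filter, Finset.mem_univ, true_and]
            exact hmin g hg
          have h1 : (A.card : ℝ) ≤ ((Finset.univ.filter (fun g => t ε' ≤ t g)).card : ℝ) := by
            exact_mod_cast Finset.card_le_card hsub
          have h2' : ((Finset.univ.filter (fun g => t ε' ≤ t g)).card : ℝ) ≤ α * 2 ^ N := by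
            have := (Finset.mem_filter.mp hε'A).2
            exact (hiff ε').mp this
          exact h1.trans h2'

lemma map_tuple_eq_pi {Ω : Type*} [MeasureSpace Ω] [IsProbabilityMeasure (ℙ : Measure Ω)]
    {N : ℕ} (f : Fin N → Ω → ℝ) (hm : ∀ j, Measurable (f j))
    (hi : iIndepFun f ℙ) :
    Measure.map (fun ω j => f j ω) ℙ = Measure.pi (fun j => Measure.map (f j) ℙ) := by
  haveI hprob : ∀ j, IsProbabilityMeasure (Measure.map (f j) ℙ) :=
    fun j => Measure.isProbabilityMeasure_map (hm j).aemeasurable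
  haveI : ∀ j, SigmaFinite (Measure.map (f j) ℙ) := fun j => inferInstance
  refine (Measure.pi_eq fun s hs => ?_).symm
  rw [Measure.map_apply (measurable_pi_lambda _ fun j => hm j) (MeasurableSet.univ_pi hs)]
  have hpre : (fun ω j => f j ω) ⁻¹' Set.pi Set.univ s = ⋂ j ∈ Finset.univ, f j ⁻¹' s j := by
    ext ω; simp [Set.mem_pi]
  rw [hpre, (iIndepFun_iff_measure_inter_preimage_eq_mul.mp hi) Finset.univ (fun i _ => hs i)]
  exact Finset.prod_congr rfl fun j _ => (Measure.map_apply (hm j) (hs j)).symm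

end Stmt5Aux
/-- finite-sample size control of the sign-changes randomization test:
if `τ̂_j = c + η_j` with `η_j` independent and symmetric about zero, then the
sign-change p-value `p̂ = 2^{−N₁} ∑_{g∈{−1,1}^{N₁}} 1{|N₁⁻¹ ∑ g_j(τ̂_j−c)| ≥ |N₁⁻¹ ∑ (τ̂_j−c)|}`
satisfies `P(p̂ ≤ α) ≤ α`.  (Sign vectors are enumerated by `Fin N₁ → Bool`,
with `true ↦ 1` and `false ↦ −1`.) -/
theorem stmt5 {Ω : Type*} [MeasureSpace Ω] [IsProbabilityMeasure (ℙ : Measure Ω)]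
    {N₁ : ℕ} (hN₁ : 0 < N₁)
    (η : Fin N₁ → Ω → ℝ)
    (hmeas : ∀ j, Measurable (η j))
    (hindep : iIndepFun η ℙ)
    (hsym : ∀ j, Measure.map (η j) ℙ = Measure.map (fun ω => -(η j ω)) ℙ)
    (c : ℝ) (τhat : Fin N₁ → Ω → ℝ) (hτ : ∀ j ω, τhat j ω = c + η j ω)
    (phat : Ω → ℝ)
    (hp : ∀ ω, phat ω =
      (1 / ((2 : ℝ) ^ N₁)) * ∑ g : Fin N₁ → Bool,
        if |(1 / (N₁ : ℝ)) * ∑ j, (τhat j ω - c)|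
            ≤ |(1 / (N₁ : ℝ)) * ∑ j, (if g j then (1 : ℝ) else -1) * (τhat j ω - c)|
        then 1 else 0) :
    ∀ α ∈ Set.Icc (0 : ℝ) 1, ℙ {ω | phat ω ≤ α} ≤ ENNReal.ofReal α := by
  classical
  intro α hα
  obtain ⟨hα0, _⟩ := hα
  have hphat : ∀ ω, phat ω = Stmt5Aux.pv N₁ (fun j => η j ω) := by
    intro ω
    rw [hp ω]
    unfold Stmt5Aux.pv Stmt5Aux.T Stmt5Aux.act Stmt5Aux.sgn
    simp only [hτ, add_sub_cancel_left]
  set X : Ω → (Fin N₁ → ℝ) := fun ω j => η j ω with hX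
  have hXm : Measurable X := measurable_pi_lambda _ fun j => hmeas j
  have hSmeas : MeasurableSet {x : Fin N₁ → ℝ | Stmt5Aux.pv N₁ x ≤ α} :=
    measurableSet_le (Stmt5Aux.measurable_pv N₁) measurable_const
  -- invariance of the joint law under sign changes
  have hinv : ∀ ε : Fin N₁ → Bool,
      Measure.map (fun ω => Stmt5Aux.act ε (X ω)) ℙ = Measure.map X ℙ := by
    intro ε
    have hm' : ∀ j, Measurable (fun ω => Stmt5Aux.sgn (ε j) * η j ω) :=
      fun j => (hmeas j).const_mul _
    have hi' : iIndepFun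
        (fun j ω => Stmt5Aux.sgn (ε j) * η j ω) ℙ :=
      hindep.comp (fun j (y : ℝ) => Stmt5Aux.sgn (ε j) * y)
        (fun j => measurable_const_mul _)
    have hmarg : ∀ j, Measure.map (fun ω => Stmt5Aux.sgn (ε j) * η j ω) ℙ
        = Measure.map (η j) ℙ := by
      intro j
      by_cases h : ε j = true
      · have h1 : (fun ω => Stmt5Aux.sgn (ε j) * η j ω) = η j := by
          funext ω; simp [Stmt5Aux.sgn, h]
        rw [h1]
      · have h1 : (fun ω => Stmt5Aux.sgn (ε j) * η j ω) = fun ω => -(η j ω) := by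
          funext ω; simp [Stmt5Aux.sgn, h]
        rw [h1, ← hsym j]
    have e1 : (fun ω => Stmt5Aux.act ε (X ω))
        = fun ω j => Stmt5Aux.sgn (ε j) * η j ω := rfl
    rw [e1, Stmt5Aux.map_tuple_eq_pi _ hm' hi',
        Stmt5Aux.map_tuple_eq_pi η hmeas hindep]
    exact congrArg _ (funext fun j => hmarg j)
  have hPeq : ∀ ε : Fin N₁ → Bool,
      ℙ {ω | Stmt5Aux.pv N₁ (Stmt5Aux.act ε (X ω)) ≤ α} = ℙ {ω | phat ω ≤ α} := by
    intro ε
    have h1 : {ω | Stmt5Aux.pv N₁ (Stmt5Aux.act ε (X ω)) ≤ α}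
        = (fun ω => Stmt5Aux.act ε (X ω)) ⁻¹' {x | Stmt5Aux.pv N₁ x ≤ α} := rfl
    have h2 : {ω | phat ω ≤ α} = X ⁻¹' {x | Stmt5Aux.pv N₁ x ≤ α} := by
      ext ω; simp [hphat ω, hX]
    have hcomp : Measurable (fun ω => Stmt5Aux.act ε (X ω)) :=
      (Stmt5Aux.measurable_act ε).comp hXm
    rw [h1, h2, ← Measure.map_apply hcomp hSmeas,
        ← Measure.map_apply hXm hSmeas, hinv ε]
  have hms : ∀ ε : Fin N₁ → Bool,
      MeasurableSet {ω | Stmt5Aux.pv N₁ (Stmt5Aux.act ε (X ω)) ≤ α} :=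
    fun ε => ((Stmt5Aux.measurable_act ε).comp hXm) hSmeas
  have hsum : (∑ ε : Fin N₁ → Bool, ℙ {ω | Stmt5Aux.pv N₁ (Stmt5Aux.act ε (X ω)) ≤ α})
      ≤ ENNReal.ofReal (α * 2 ^ N₁) := by
    calc (∑ ε : Fin N₁ → Bool, ℙ {ω | Stmt5Aux.pv N₁ (Stmt5Aux.act ε (X ω)) ≤ α})
        = ∑ ε : Fin N₁ → Bool, ∫⁻ ω, Set.indicator
            {ω | Stmt5Aux.pv N₁ (Stmt5Aux.act ε (X ω)) ≤ α} (fun _ => 1) ω ∂ℙ := by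
          refine Finset.sum_congr rfl fun ε _ => ?_
          exact (lintegral_indicator_one (hms ε)).symm
      _ = ∫⁻ ω, ∑ ε : Fin N₁ → Bool, Set.indicator
            {ω | Stmt5Aux.pv N₁ (Stmt5Aux.act ε (X ω)) ≤ α} (fun _ => 1) ω ∂ℙ :=
          (lintegral_finset_sum _ (fun ε _ => (measurable_one.indicator (hms ε)))).symm
      _ ≤ ∫⁻ _, ENNReal.ofReal (α * 2 ^ N₁) ∂ℙ := by
          refine lintegral_mono fun ω => ?_
          have hkey := Stmt5Aux.key (X ω) α hα0
          calc (∑ ε : Fin N₁ → Bool, Set.indicator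
                {ω | Stmt5Aux.pv N₁ (Stmt5Aux.act ε (X ω)) ≤ α} (fun _ => 1) ω)
              = ∑ ε : Fin N₁ → Bool,
                  ENNReal.ofReal (if Stmt5Aux.pv N₁ (Stmt5Aux.act ε (X ω)) ≤ α
                    then (1:ℝ) else 0) := by
                refine Finset.sum_congr rfl fun ε _ => ?_
                by_cases h : Stmt5Aux.pv N₁ (Stmt5Aux.act ε (X ω)) ≤ α <;>
                  simp [Set.indicator, h]
            _ = ENNReal.ofReal (∑ ε : Fin N₁ → Bool,
                  if Stmt5Aux.pv N₁ (Stmt5Aux.act ε (X ω)) ≤ α then (1:ℝ) else 0) :=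
                (ENNReal.ofReal_sum_of_nonneg (fun ε _ => by positivity)).symm
            _ ≤ ENNReal.ofReal (α * 2 ^ N₁) := ENNReal.ofReal_le_ofReal hkey
      _ = ENNReal.ofReal (α * 2 ^ N₁) := by simp
  have hcard : (∑ ε : Fin N₁ → Bool, ℙ {ω | Stmt5Aux.pv N₁ (Stmt5Aux.act ε (X ω)) ≤ α})
      = (2 : ℝ≥0∞) ^ N₁ * ℙ {ω | phat ω ≤ α} := by
    rw [Finset.sum_congr rfl fun ε _ => hPeq ε, Finset.sum_const, Finset.card_univ,
      Fintype.card_fun, nsmul_eq_mul]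
    congr 1
    simp [Nat.cast_pow]
  rw [hcard] at hsum
  have hr : ENNReal.ofReal (α * 2 ^ N₁) = (2 : ℝ≥0∞) ^ N₁ * ENNReal.ofReal α := by
    rw [ENNReal.ofReal_mul hα0, mul_comm]
    congr 1
    rw [ENNReal.ofReal_pow (by norm_num : (0:ℝ) ≤ 2)]
    norm_num
  rw [hr] at hsum
  have h2 : ((2 : ℝ≥0∞) ^ N₁) ≠ 0 := by positivity
  have h2' : ((2 : ℝ≥0∞) ^ N₁) ≠ ⊤ := by
    exact ENNReal.pow_ne_top (by norm_num)
  exact (ENNReal.mul_le_mul_iff_right h2 h2').mp hsum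
end

section
/- Let τ* ∈ ℝ, let W₁ be a real random variable, and let (W_j)_{j≥2} be i.i.d. integrable real random variables with E[W_j] = 0. For each N₀ ≥ 1 define τ̂_{N₀} = τ* + W₁ − (1/N₀) Σ_{j=2}^{N₀+1} W_j. Then τ̂_{N₀} → τ* + W₁ in probability as N₀ → ∞. In particular, if P(W₁ = 0) < 1, the estimator τ̂_{N₀} is not consistent for τ*: it does not converge in probability to τ*. -/
open MeasureTheory ProbabilityTheory Filter Topology
open scoped ProbabilityTheory

/-- the DiD estimator with one treated unit,
`τ̂_{N₀} = τ* + W₁ − (1/N₀) ∑_{j=2}^{N₀+1} W_j` (here `W 0` is the treated unit's error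
and `W j`, `j ≥ 1`, are the i.i.d. mean-zero control errors), converges in probability
to `τ* + W₁`; in particular, if `P(W₁ = 0) < 1`, it is not consistent for `τ*`. -/
theorem stmt11 {Ω : Type*} [MeasureSpace Ω] [IsProbabilityMeasure (ℙ : Measure Ω)]
    (τstar : ℝ) (W : ℕ → Ω → ℝ)
    (hmeas : ∀ j, Measurable (W j))
    -- the control errors (W_j)_{j ≥ 1} are i.i.d., integrable, with mean zero
    (hindep : iIndepFun
      (fun j => W (j + 1)) ℙ)
    (hident : ∀ j k : ℕ, Measure.map (W (j + 1)) ℙ = Measure.map (W (k + 1)) ℙ)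
    (hint : ∀ j : ℕ, Integrable (W (j + 1)) ℙ)
    (hmean : ∀ j : ℕ, ∫ ω, W (j + 1) ω ∂ℙ = 0)
    (τhat : ℕ → Ω → ℝ)
    (hτ : ∀ N₀ ω, τhat N₀ ω =
      τstar + W 0 ω - (1 / (N₀ : ℝ)) * ∑ j ∈ Finset.Icc 1 N₀, W j ω) :
    (∀ δ > (0 : ℝ),
      Tendsto (fun N₀ => ℙ {ω | δ < |τhat N₀ ω - (τstar + W 0 ω)|}) atTop (nhds 0))
    ∧ (ℙ {ω | W 0 ω = 0} < 1 →
        ¬ ∀ δ > (0 : ℝ),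
          Tendsto (fun N₀ => ℙ {ω | δ < |τhat N₀ ω - τstar|}) atTop (nhds 0)) := by
  -- the averages of the control errors
  set X : ℕ → Ω → ℝ := fun i => W (i + 1) with hX
  have hslln : ∀ᵐ ω ∂(ℙ : Measure Ω),
      Tendsto (fun n : ℕ => (∑ i ∈ Finset.range n, X i ω) / n) atTop (𝓝 0) := by
    have := strong_law_ae_real X (hint 0)
      (fun i j hij => hindep.indepFun hij)
      (fun i => ⟨(hmeas _).aemeasurable, (hmeas _).aemeasurable, hident i 0⟩)
    simpa [show ∫ x, X 0 x ∂ℙ = 0 from hmean 0] using this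
  have hdiff : ∀ N₀ ω, τhat N₀ ω - (τstar + W 0 ω)
      = -((∑ i ∈ Finset.range N₀, X i ω) / N₀) := by
    intro N₀ ω
    have hs : ∑ j ∈ Finset.Icc 1 N₀, W j ω = ∑ i ∈ Finset.range N₀, X i ω := by
      rw [← Finset.Ico_add_one_right_eq_Icc, Finset.sum_Ico_eq_sum_range]
      simp [hX, add_comm]
    rw [hτ, hs]
    ring
  have hmeasavg : ∀ n : ℕ, AEStronglyMeasurable
      (fun ω => (∑ i ∈ Finset.range n, X i ω) / (n : ℝ)) ℙ := by
    intro n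
    exact ((Finset.measurable_sum _ (fun i _ => hmeas (i + 1))).div_const _).aestronglyMeasurable
  have hTIM : TendstoInMeasure (ℙ : Measure Ω)
      (fun n ω => (∑ i ∈ Finset.range n, X i ω) / (n : ℝ)) atTop (fun _ => 0) :=
    tendstoInMeasure_of_tendsto_ae hmeasavg hslln
  have part1 : ∀ δ > (0 : ℝ),
      Tendsto (fun N₀ => ℙ {ω | δ < |τhat N₀ ω - (τstar + W 0 ω)|}) atTop (nhds 0) := by
    intro δ hδ
    have h := tendstoInMeasure_iff_dist.mp hTIM δ hδ
    refine tendsto_of_tendsto_of_tendsto_of_le_of_le tendsto_const_nhds h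
      (fun n => zero_le) ?_
    intro n
    refine measure_mono ?_
    intro ω hω
    simp only [Set.mem_setOf_eq] at hω ⊢
    rw [hdiff, abs_neg] at hω
    rw [Real.dist_eq, sub_zero]
    exact hω.le
  refine ⟨part1, ?_⟩
  intro hlt hcons
  -- there is δ > 0 with positive probability that |W 0| > δ
  have hpos : 0 < ℙ {ω | W 0 ω ≠ 0} := by
    by_contra h
    push_neg at h
    have h0 : ℙ {ω | W 0 ω ≠ 0} = 0 := nonpos_iff_eq_zero.mp h
    have : ℙ {ω | W 0 ω = 0} = 1 := by
      have := prob_compl_eq_zero_iff (μ := (ℙ : Measure Ω))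
        (s := {ω | W 0 ω = 0}) ((hmeas 0) (measurableSet_singleton 0))
      rw [← this]
      simpa [Set.compl_setOf] using h0
    exact absurd this (ne_of_lt hlt)
  have hU : {ω | W 0 ω ≠ 0} = ⋃ n : ℕ, {ω | (1 : ℝ)/(n+1) < |W 0 ω|} := by
    ext ω
    simp only [Set.mem_setOf_eq, Set.mem_iUnion]
    constructor
    · intro h
      have habs : 0 < |W 0 ω| := abs_pos.mpr h
      obtain ⟨n, hn⟩ := exists_nat_one_div_lt habs
      exact ⟨n, hn⟩
    · rintro ⟨n, hn⟩
      intro h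
      rw [h] at hn
      simp at hn
      have : (0:ℝ) < 1/(n+1) := by positivity
      linarith
  obtain ⟨n, hn⟩ : ∃ n : ℕ, 0 < ℙ {ω | (1 : ℝ)/(n+1) < |W 0 ω|} := by
    by_contra h
    push_neg at h
    have : ℙ {ω | W 0 ω ≠ 0} = 0 := by
      rw [hU]
      exact measure_iUnion_null fun n =>
        nonpos_iff_eq_zero.mp (by simpa using h n)
    exact absurd this (ne_of_gt hpos)
  set δ : ℝ := 1/(n+1) with hδdef
  have hδpos : (0:ℝ) < δ := by positivity
  -- inclusion: {|W0| > δ} ⊆ {|τhat - (τstar+W0)| > δ/2} ∪ {|τhat - τstar| > δ/2}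
  have hincl : ∀ N₀ : ℕ, {ω | δ < |W 0 ω|} ⊆
      {ω | δ/2 < |τhat N₀ ω - (τstar + W 0 ω)|} ∪ {ω | δ/2 < |τhat N₀ ω - τstar|} := by
    intro N₀ ω hω
    simp only [Set.mem_setOf_eq, Set.mem_union] at hω ⊢
    by_contra h
    push_neg at h
    obtain ⟨h1, h2⟩ := h
    have : |W 0 ω| ≤ δ/2 + δ/2 := by
      have := abs_sub (τhat N₀ ω - τstar) (τhat N₀ ω - (τstar + W 0 ω))
      calc |W 0 ω| = |(τhat N₀ ω - τstar) - (τhat N₀ ω - (τstar + W 0 ω))| := by ring_nf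
        _ ≤ |τhat N₀ ω - τstar| + |τhat N₀ ω - (τstar + W 0 ω)| := abs_sub _ _
        _ ≤ δ/2 + δ/2 := add_le_add h2 h1
    linarith
  have hsum : Tendsto (fun N₀ => ℙ {ω | δ/2 < |τhat N₀ ω - (τstar + W 0 ω)|}
      + ℙ {ω | δ/2 < |τhat N₀ ω - τstar|}) atTop (nhds 0) := by
    have := Tendsto.add (part1 (δ/2) (by positivity)) (hcons (δ/2) (by positivity))
    simpa using this
  have hle : ∀ N₀ : ℕ, ℙ {ω | δ < |W 0 ω|} ≤
      ℙ {ω | δ/2 < |τhat N₀ ω - (τstar + W 0 ω)|} + ℙ {ω | δ/2 < |τhat N₀ ω - τstar|} :=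
    fun N₀ => le_trans (measure_mono (hincl N₀)) (measure_union_le _ _)
  have : ℙ {ω | δ < |W 0 ω|} ≤ 0 :=
    le_of_tendsto_of_tendsto tendsto_const_nhds hsum (Eventually.of_forall hle)
  exact absurd (nonpos_iff_eq_zero.mp this) (ne_of_gt hn)
end
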